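/- Let φ : G → G' be a half-isomorphism of groups and a, b, c ∈ G such that φ(ab) = φ(a)φ(b), φ(ac) = φ(c)φ(a), φ(bc) = φ(b)φ(c), and ac ≠ ca. Then cb·ac = ca·cb in G. -/
import Mathlib

private lemma half_disj {G G' : Type*} [Group G] [Group G'] (φ : G → G')
    (hinj : Function.Injective φ)
    (hhalf : ∀ x y : G, φ (x * y) = φ x * φ y ∨ φ (x * y) = φ y * φ x)
    (a b c : G)
    (h1 : φ (a * b) = φ a * φ b)
    (h2 : φ (a * c) = φ c * φ a)
    (h3 : φ (b * c) = φ b * φ c)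
    (e1 : φ (b * a) = φ b * φ a)
    (e2 : φ (c * b) = φ c * φ b)
    (e3 : φ (c * a) = φ a * φ c)
    (hne : a * c ≠ c * a) :
    a * b = b * a ∨ b * c = c * b := by
  by_contra hcon
  push_neg at hcon
  obtain ⟨hab', hbc'⟩ := hcon
  have cAC : φ a * φ c = φ c * φ a → False := fun h =>
    hne (hinj (by rw [h2, e3]; exact h.symm))
  have cAB : φ a * φ b = φ b * φ a → False := fun h =>
    hab' (hinj (by rw [h1, e1]; exact h))
  have cBC : φ b * φ c = φ c * φ b → False := fun h =>
    hbc' (hinj (by rw [h3, e2]; exact h))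
  -- step p : φ(b(ac)) = (CA)B  and  (CA)B = (BA)C
  have heq_p : φ ((b * a) * c) = φ (b * (a * c)) := congrArg φ (mul_assoc b a c)
  obtain ⟨pval, hρ1⟩ : φ (b * (a * c)) = (φ c * φ a) * φ b ∧
      (φ c * φ a) * φ b = (φ b * φ a) * φ c := by
    rcases hhalf b (a * c) with p1 | p1 <;> rw [h2] at p1 <;>
      rcases hhalf (b * a) c with p2 | p2 <;> rw [e1] at p2
    · have h : φ b * (φ c * φ a) = (φ b * φ a) * φ c := by rw [← p1, ← heq_p, p2]
      simp only [mul_assoc] at h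
      exact ((cAC (mul_left_cancel h).symm).elim)
    · have h : φ b * (φ c * φ a) = φ c * (φ b * φ a) := by rw [← p1, ← heq_p, p2]
      simp only [← mul_assoc] at h
      exact (cBC (mul_right_cancel h)).elim
    · exact ⟨p1, by rw [← p1, ← heq_p, p2]⟩
    · have h : (φ c * φ a) * φ b = φ c * (φ b * φ a) := by rw [← p1, ← heq_p, p2]
      simp only [mul_assoc] at h
      exact (cAB (mul_left_cancel h)).elim
  -- step q : ρ2 : A(CB) = B(CA)
  have heq_q : φ ((a * c) * b) = φ (a * (c * b)) := congrArg φ (mul_assoc a c b)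
  have hρ2 : φ a * (φ c * φ b) = φ b * (φ c * φ a) := by
    rcases hhalf a (c * b) with q1 | q1 <;> rw [e2] at q1 <;>
      rcases hhalf (a * c) b with q2 | q2 <;> rw [h2] at q2
    · have h : φ a * (φ c * φ b) = (φ c * φ a) * φ b := by rw [← q1, ← heq_q, q2]
      simp only [← mul_assoc] at h
      exact (cAC (mul_right_cancel h)).elim
    · rw [← q1, ← heq_q, q2]
    · have h : (φ c * φ b) * φ a = (φ c * φ a) * φ b := by rw [← q1, ← heq_q, q2]
      simp only [mul_assoc] at h
      exact (cAB (mul_left_cancel h).symm).elim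
    · have h : (φ c * φ b) * φ a = φ b * (φ c * φ a) := by rw [← q1, ← heq_q, q2]
      simp only [← mul_assoc] at h
      exact (cBC (mul_right_cancel h).symm).elim
  -- step r : φ(c(ba)) = C(BA)
  have rval : φ (c * (b * a)) = φ c * (φ b * φ a) := by
    rcases hhalf c (b * a) with r1 | r1 <;> rw [e1] at r1
    · exact r1
    · rcases hhalf (c * b) a with r2 | r2 <;> rw [e2] at r2
      · rw [show c * (b * a) = (c * b) * a from (mul_assoc c b a).symm, r2, mul_assoc]
      · have h : (φ b * φ a) * φ c = φ a * (φ c * φ b) := by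
          rw [← r1, show c * (b * a) = (c * b) * a from (mul_assoc c b a).symm, r2]
        have h'' : (φ c * φ a) * φ b = (φ a * φ c) * φ b := by
          rw [hρ1, h, ← mul_assoc]
        exact (cAC (mul_right_cancel h'').symm).elim
  -- step z1 : all cases contradictory
  have heq_u1 : φ ((c * b) * (a * c)) = φ (c * (b * (a * c))) :=
    congrArg φ (mul_assoc c b (a * c))
  have heq_u3 : φ ((c * (b * a)) * c) = φ (c * (b * (a * c))) :=
    congrArg φ (by simp only [mul_assoc])
  rcases hhalf (c * b) (a * c) with u1 | u1 <;> rw [e2, h2] at u1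
  · rcases hhalf c (b * (a * c)) with u2 | u2 <;> rw [pval] at u2
    · have h : (φ c * φ b) * (φ c * φ a) = φ c * ((φ c * φ a) * φ b) := by
        rw [← u1, heq_u1, u2]
      simp only [mul_assoc] at h
      have h' := mul_left_cancel h
      -- h' : B*(C*A) = C*(A*B)
      have h'' : (φ a * φ c) * φ b = (φ c * φ a) * φ b := by
        rw [mul_assoc, hρ2, h', mul_assoc]
      exact cAC (mul_right_cancel h'')
    · rcases hhalf (c * (b * a)) c with u3 | u3 <;> rw [rval] at u3
      · have h : (φ c * φ b) * (φ c * φ a) = (φ c * (φ b * φ a)) * φ c := by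
          rw [← u1, heq_u1, ← heq_u3, u3]
        simp only [mul_assoc] at h
        exact cAC (mul_left_cancel (mul_left_cancel h)).symm
      · have h : (φ c * φ b) * (φ c * φ a) = φ c * (φ c * (φ b * φ a)) := by
          rw [← u1, heq_u1, ← heq_u3, u3]
        simp only [mul_assoc] at h
        have h' := mul_left_cancel h
        simp only [← mul_assoc] at h'
        exact cBC (mul_right_cancel h')
  · rcases hhalf c (b * (a * c)) with u2 | u2 <;> rw [pval] at u2
    · have h : (φ c * φ a) * (φ c * φ b) = φ c * ((φ c * φ a) * φ b) := by
        rw [← u1, heq_u1, u2]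
      simp only [mul_assoc] at h
      have h' := mul_left_cancel h
      simp only [← mul_assoc] at h'
      exact cAC (mul_right_cancel h')
    · have h : (φ c * φ a) * (φ c * φ b) = ((φ c * φ a) * φ b) * φ c := by
        rw [← u1, heq_u1, u2]
      simp only [mul_assoc] at h
      exact cBC (mul_left_cancel (mul_left_cancel h)).symm

private lemma half_aux {G G' : Type*} [Group G] [Group G'] (φ : G → G')
    (hinj : Function.Injective φ)
    (hhalf : ∀ x y : G, φ (x * y) = φ x * φ y ∨ φ (x * y) = φ y * φ x)
    (a b c : G)
    (h1 : φ (a * b) = φ a * φ b)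
    (h2 : φ (a * c) = φ c * φ a)
    (h3 : φ (b * c) = φ b * φ c)
    (e1 : φ (b * a) = φ b * φ a)
    (e2 : φ (c * b) = φ c * φ b)
    (e3 : φ (c * a) = φ a * φ c)
    (e4 : φ (c * c) = φ c * φ c)
    (e5 : φ ((c * c) * a) = φ a * (φ c * φ c))
    (hne : a * c ≠ c * a)
    (hcb : b * c = c * b) :
    a * b = b * a := by
  by_contra hab'
  have cAC : φ a * φ c = φ c * φ a → False := fun h =>
    hne (hinj (by rw [h2, e3]; exact h.symm))
  have cAB : φ a * φ b = φ b * φ a → False := fun h =>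
    hab' (hinj (by rw [h1, e1]; exact h))
  have hBC : φ b * φ c = φ c * φ b := by rw [← h3, ← e2, hcb]
  have cG : a * (c * b) = b * (a * c) → False := fun h =>
    hab' (mul_right_cancel
      (show (a * b) * c = (b * a) * c by rw [mul_assoc, hcb, h, mul_assoc]))
  have hqp : φ (a * (c * b)) = φ (b * (a * c)) → False := fun h => cG (hinj h)
  have hbacq : φ (b * (a * c)) = φ (a * (c * b)) → False := fun h => cG (hinj h).symm
  -- step q : φ(a(cb)) = C(BA)
  have heq_q : φ ((a * c) * b) = φ (a * (c * b)) := congrArg φ (mul_assoc a c b)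
  have qval : φ (a * (c * b)) = φ c * (φ b * φ a) := by
    rcases hhalf a (c * b) with q1 | q1 <;> rw [e2] at q1
    · rcases hhalf (a * c) b with q2 | q2 <;> rw [h2] at q2
      · have h : φ a * (φ c * φ b) = (φ c * φ a) * φ b := by rw [← q1, ← heq_q, q2]
        simp only [← mul_assoc] at h
        exact (cAC (mul_right_cancel h)).elim
      · have h : φ a * (φ c * φ b) = φ b * (φ c * φ a) := by rw [← q1, ← heq_q, q2]
        rw [q1, h, ← mul_assoc, hBC, mul_assoc]
    · exact q1.trans (mul_assoc _ _ _)
  -- step p : φ(b(ac)) = (CA)B and ρ1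
  have heq_p : φ ((b * a) * c) = φ (b * (a * c)) := congrArg φ (mul_assoc b a c)
  obtain ⟨pval, hρ1⟩ : φ (b * (a * c)) = (φ c * φ a) * φ b ∧
      (φ c * φ a) * φ b = (φ b * φ a) * φ c := by
    rcases hhalf b (a * c) with p1 | p1 <;> rw [h2] at p1
    · exact absurd (p1.trans (by rw [← mul_assoc, hBC, mul_assoc, ← qval])) hbacq
    · refine ⟨p1, ?_⟩
      rcases hhalf (b * a) c with p2 | p2 <;> rw [e1] at p2
      · rw [← p1, ← heq_p, p2]
      · exact ((hbacq ((heq_p.symm.trans p2).trans qval.symm))).elim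
  -- step r : φ(c(ba)) = C(BA)
  have rval : φ (c * (b * a)) = φ c * (φ b * φ a) := by
    rcases hhalf c (b * a) with r1 | r1 <;> rw [e1] at r1
    · exact r1
    · rcases hhalf (c * b) a with r2 | r2 <;> rw [e2] at r2
      · rw [show c * (b * a) = (c * b) * a from (mul_assoc c b a).symm, r2, mul_assoc]
      · have h : (φ b * φ a) * φ c = φ a * (φ c * φ b) := by
          rw [← r1, show c * (b * a) = (c * b) * a from (mul_assoc c b a).symm, r2]
        have h'' : (φ c * φ a) * φ b = (φ a * φ c) * φ b := by
          rw [hρ1, h, ← mul_assoc]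
        exact (cAC (mul_right_cancel h'').symm).elim
  -- step t : φ(a(bc)) = A(BC)
  have tval : φ (a * (b * c)) = φ a * (φ b * φ c) := by
    rcases hhalf a (b * c) with t1 | t1 <;> rw [h3] at t1
    · exact t1
    · rcases hhalf (a * b) c with t2 | t2 <;> rw [h1] at t2
      · rw [show a * (b * c) = (a * b) * c from (mul_assoc a b c).symm, t2, mul_assoc]
      · have h : φ ((a * b) * c) = φ (b * (a * c)) := by rw [t2, pval, mul_assoc]
        have h' := hinj h
        exact (hab' (mul_right_cancel (h'.trans (mul_assoc b a c).symm))).elim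
  -- K5 : A(BC) = C(BA)
  have K5 : φ a * (φ b * φ c) = φ c * (φ b * φ a) := by
    rw [← tval, ← qval]
    exact congrArg φ (by rw [hcb])
  -- K3 : C(BA) = (AC)B
  have hw : φ (b * (c * a)) = φ c * (φ b * φ a) := by
    rw [show b * (c * a) = c * (b * a) from by rw [← mul_assoc, hcb, mul_assoc], rval]
  have K3 : φ c * (φ b * φ a) = (φ a * φ c) * φ b := by
    rcases hhalf b (c * a) with w1 | w1 <;> rw [e3] at w1
    · have h : φ c * (φ b * φ a) = (φ c * φ a) * φ b := by
        rw [← hw, w1, ← mul_assoc, ← hρ1]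
      exact (hqp (qval.trans (h.trans pval.symm))).elim
    · exact hw.symm.trans w1
  -- step s : g4 : c(ab) = b(ac)
  have g4 : c * (a * b) = b * (a * c) := by
    rcases hhalf c (a * b) with s1 | s1 <;> rw [h1] at s1
    · exact hinj (s1.trans (by rw [← mul_assoc, ← pval]))
    · have gx : c * (a * b) = a * (b * c) := hinj (s1.trans (by rw [mul_assoc, ← tval]))
      rcases hhalf (c * a) b with s2 | s2 <;> rw [e3] at s2
      · have h : φ (c * (a * b)) = φ (a * (c * b)) := by
          rw [show c * (a * b) = (c * a) * b from (mul_assoc c a b).symm, s2, ← K3, ← qval]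
        have h' := hinj h
        have h'' : (c * a) * b = (a * c) * b := by rw [mul_assoc, h', mul_assoc]
        exact (hne (mul_right_cancel h'').symm).elim
      · have h : φ (c * (a * b)) = φ (b * (a * c)) := by
          rw [show c * (a * b) = (c * a) * b from (mul_assoc c a b).symm, s2,
            ← mul_assoc, ← hρ1, ← pval]
        have h' := hinj h
        have h'' : (b * a) * c = (a * b) * c := by rw [mul_assoc, ← h', gx, mul_assoc]
        exact (hab' (mul_right_cancel h'').symm).elim
  -- step z1 : uval and δ1
  have hz1 : c * (b * (a * c)) = (c * c) * (a * b) := by rw [← g4, ← mul_assoc]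
  have heq_u1 : φ ((c * b) * (a * c)) = φ (c * (b * (a * c))) :=
    congrArg φ (mul_assoc c b (a * c))
  have heq_u2 : φ ((c * c) * (a * b)) = φ (c * (b * (a * c))) := (congrArg φ hz1).symm
  have heq_u3 : φ (((c * c) * a) * b) = φ (c * (b * (a * c))) :=
    congrArg φ ((mul_assoc (c * c) a b).trans hz1.symm)
  obtain ⟨uval, δ1⟩ : φ (c * (b * (a * c))) = (φ c * φ b) * (φ c * φ a) ∧
      (φ c * φ b) * (φ c * φ a) = (φ a * φ b) * (φ c * φ c) := by
    rcases hhalf (c * b) (a * c) with u1 | u1 <;> rw [e2, h2] at u1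
    · rcases hhalf (c * c) (a * b) with u2 | u2 <;> rw [e4, h1] at u2
      · have h : (φ c * φ b) * (φ c * φ a) = (φ c * φ c) * (φ a * φ b) := by
          rw [← u1, heq_u1, ← heq_u2, u2]
        simp only [mul_assoc] at h
        have h' := mul_left_cancel h
        exact (hqp (by
          rw [qval, pval, ← mul_assoc, ← hBC, mul_assoc, h', ← mul_assoc])).elim
      · exact ⟨heq_u1.symm.trans u1,
          u1.symm.trans ((heq_u1.trans heq_u2.symm).trans u2)⟩
    · rcases hhalf (c * c) (a * b) with u2 | u2 <;> rw [e4, h1] at u2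
      · have h : (φ c * φ a) * (φ c * φ b) = (φ c * φ c) * (φ a * φ b) := by
          rw [← u1, heq_u1, ← heq_u2, u2]
        simp only [mul_assoc] at h
        have h' := mul_left_cancel h
        simp only [← mul_assoc] at h'
        exact (cAC (mul_right_cancel h')).elim
      · rcases hhalf ((c * c) * a) b with u3 | u3 <;> rw [e5] at u3
        · have h : (φ c * φ a) * (φ c * φ b) = (φ a * (φ c * φ c)) * φ b := by
            rw [← u1, heq_u1, ← heq_u3, u3]
          simp only [← mul_assoc] at h
          exact (cAC (mul_right_cancel (mul_right_cancel h)).symm).elim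
        · have h : (φ a * φ b) * (φ c * φ c) = φ b * (φ a * (φ c * φ c)) := by
            rw [← u2, heq_u2, ← heq_u3, u3]
          simp only [← mul_assoc] at h
          exact (cAB (mul_right_cancel (mul_right_cancel h))).elim
  -- step z2 : final contradiction
  have heq_v : φ ((c * a) * (c * b)) = φ (c * (a * (c * b))) :=
    congrArg φ (mul_assoc c a (c * b))
  rcases hhalf c (a * (c * b)) with v1 | v1 <;> rw [qval] at v1
  · have v1' : φ (c * (a * (c * b))) = (φ c * φ a) * (φ c * φ b) := by
      rw [v1, K3]; simp only [mul_assoc]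
    rcases hhalf (c * a) (c * b) with v2 | v2 <;> rw [e3, e2] at v2
    · have h : (φ a * φ c) * (φ c * φ b) = (φ c * φ a) * (φ c * φ b) := by
        rw [← v2, heq_v, v1']
      exact cAC (mul_right_cancel h)
    · have h : (φ c * φ b) * (φ a * φ c) = (φ c * φ a) * (φ c * φ b) := by
        rw [← v2, heq_v, v1']
      simp only [mul_assoc] at h
      have h' := mul_left_cancel h
      -- h' : B*(A*C) = A*(C*B)
      have h'' : (φ c * φ a) * φ b = (φ a * φ c) * φ b := by
        rw [hρ1, mul_assoc, h', mul_assoc]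
      exact cAC (mul_right_cancel h'').symm
  · have h : φ (c * (a * (c * b))) = φ (c * (b * (a * c))) := by
      rw [v1, ← K5, uval, δ1]; simp only [mul_assoc]
    exact cG (mul_left_cancel (hinj h))

theorem stmt_17 {G G' : Type*} [Group G] [Group G'] (φ : G → G')
    (hbij : Function.Bijective φ)
    (hhalf : ∀ x y : G, φ (x * y) = φ x * φ y ∨ φ (x * y) = φ y * φ x)
    (a b c : G)
    (h1 : φ (a * b) = φ a * φ b)
    (h2 : φ (a * c) = φ c * φ a)
    (h3 : φ (b * c) = φ b * φ c)
    (hab : ∀ x ∈ Subgroup.closure ({a, b} : Set G), ∀ y ∈ Subgroup.closure ({a, b} : Set G),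
      φ (x * y) = φ x * φ y)
    (hac : ∀ x ∈ Subgroup.closure ({a, c} : Set G), ∀ y ∈ Subgroup.closure ({a, c} : Set G),
      φ (x * y) = φ y * φ x)
    (hbc : ∀ x ∈ Subgroup.closure ({b, c} : Set G), ∀ y ∈ Subgroup.closure ({b, c} : Set G),
      φ (x * y) = φ x * φ y)
    (hne : a * c ≠ c * a) :
    (c * b) * (a * c) = (c * a) * (c * b) := by
  have hinj := hbij.injective
  have ma : a ∈ Subgroup.closure ({a, b} : Set G) :=
    Subgroup.subset_closure (Set.mem_insert a {b})
  have mb : b ∈ Subgroup.closure ({a, b} : Set G) :=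
    Subgroup.subset_closure (Set.mem_insert_of_mem a rfl)
  have ma' : a ∈ Subgroup.closure ({a, c} : Set G) :=
    Subgroup.subset_closure (Set.mem_insert a {c})
  have mc' : c ∈ Subgroup.closure ({a, c} : Set G) :=
    Subgroup.subset_closure (Set.mem_insert_of_mem a rfl)
  have mb'' : b ∈ Subgroup.closure ({b, c} : Set G) :=
    Subgroup.subset_closure (Set.mem_insert b {c})
  have mc'' : c ∈ Subgroup.closure ({b, c} : Set G) :=
    Subgroup.subset_closure (Set.mem_insert_of_mem b rfl)
  have e1 : φ (b * a) = φ b * φ a := hab b mb a ma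
  have e2 : φ (c * b) = φ c * φ b := hbc c mc'' b mb''
  have e3 : φ (c * a) = φ a * φ c := hac c mc' a ma'
  have e4 : φ (c * c) = φ c * φ c := hac c mc' c mc'
  have e6 : φ (a * a) = φ a * φ a := hac a ma' a ma'
  have e5 : φ ((c * c) * a) = φ a * (φ c * φ c) := by
    rw [hac (c * c) (mul_mem mc' mc') a ma', e4]
  have e7 : φ ((a * a) * c) = φ c * (φ a * φ a) := by
    rw [hac (a * a) (mul_mem ma' ma') c mc', e6]
  have hd := half_disj φ hinj hhalf a b c h1 h2 h3 e1 e2 e3 hne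
  have hboth : a * b = b * a ∧ b * c = c * b := by
    rcases hd with hA | hC
    · exact ⟨hA, (half_aux φ hinj hhalf c b a e2 e3 e1 h3 h1 h2 e6 e7
        (fun h => hne h.symm) hA.symm).symm⟩
    · exact ⟨half_aux φ hinj hhalf a b c h1 h2 h3 e1 e2 e3 e4 e5 hne hC, hC⟩
  obtain ⟨hAB, hBC⟩ := hboth
  have key : b * (a * c) = a * (c * b) := by
    rw [← mul_assoc, ← hAB, mul_assoc, hBC]
  rw [mul_assoc, key, ← mul_assoc]
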